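/- Fix constants Λ>0, a₀>0, b₀>0 and let Γ : S×S → [0,∞] satisfy the two-sided Gaussian bound (1/Λ)·G_{b₀}(z,ζ) ≤ Γ(z,ζ) ≤ Λ·G_{a₀}(z,ζ) for all z,ζ∈S. Then there exists λ₀∈(0,1/8], depending only on Λ, a₀, b₀ and the doubling constant c_d, such that for all M≥e, r>0 with ℝ^N×(−r,r)⊆S, and all points z=(x,t), ζ=(ξ,τ), (y,s) satisfying t>τ, d(x,0)≤√(λ₀ r log M), d(ξ,0)≤√(λ₀ r log M), t,τ∈(−λ₀r, λ₀r), τ ≤ s ≤ t, and d(y,ξ) ≥ (1/2)·√(r log M / 2), one has Γ(y,s,ζ) ≤ (1/2)·Γ(z,ζ). -/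

import Mathlib

open MeasureTheory Set
open scoped ENNReal NNReal

noncomputable section

/-- ℝ^N with Euclidean structure and Lebesgue measure. -/
abbrev Vec (N : ℕ) := EuclideanSpace ℝ (Fin N)

/-- The `d`-ball `B(x,r) = {y : d(x,y) < r}`. -/
def dBall {N : ℕ} (d : Vec N → Vec N → ℝ) (x : Vec N) (r : ℝ) : Set (Vec N) :=
  {y | d x y < r}

/-- Lebesgue measure is doubling with respect to `d`, with doubling constant `cd`. -/
def Doubling {N : ℕ} (d : Vec N → Vec N → ℝ) (cd : ℝ) : Prop :=
  ∀ (x : Vec N) (r : ℝ), 0 < r →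
    volume (dBall d x (2 * r)) ≤ ENNReal.ofReal cd * volume (dBall d x r)

/-- `d` is a metric on ℝ^N inducing the Euclidean topology (with bounded `d`-balls,
as in assumption (D1) of the paper). -/
structure GoodMetric {N : ℕ} (d : Vec N → Vec N → ℝ) : Prop where
  nonneg : ∀ x y, 0 ≤ d x y
  eq_zero_iff : ∀ x y, d x y = 0 ↔ x = y
  symm : ∀ x y, d x y = d y x
  triangle : ∀ x y z, d x z ≤ d x y + d y z
  cont : Continuous fun p : Vec N × Vec N => d p.1 p.2
  finer : ∀ (x : Vec N) (ε : ℝ), 0 < ε → ∃ δ > 0, ∀ y, d x y < δ → dist x y < ε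
  bounded : ∀ (x : Vec N) (r : ℝ), Bornology.IsBounded (dBall d x r)

/-- The strip `S = ℝ^N × (T₁,T₂)`. -/
def strip (N : ℕ) (T₁ T₂ : EReal) : Set (Vec N × ℝ) :=
  {z | T₁ < (z.2 : EReal) ∧ (z.2 : EReal) < T₂}

/-- The `d`-Gaussian kernel of exponent `a`. -/
def gaussK {N : ℕ} (d : Vec N → Vec N → ℝ) (a : ℝ) (z ζ : Vec N × ℝ) : ℝ≥0∞ :=
  if ζ.2 < z.2 then
    (volume (dBall d z.1 (Real.sqrt (z.2 - ζ.2))))⁻¹ *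
      ENNReal.ofReal (Real.exp (-a * d z.1 ζ.1 ^ 2 / (z.2 - ζ.2)))
  else 0

/-- Capacity of `F` with respect to the kernel `K`: supremum of total masses of
nonnegative Radon measures supported in `F` whose `K`-potential is `≤ 1` on `X`. -/
def capac {α : Type*} [TopologicalSpace α] [MeasurableSpace α]
    (X : Set α) (K : α → α → ℝ≥0∞) (F : Set α) : ℝ≥0∞ :=
  ⨆ (μ : Measure α) (_ : μ.InnerRegular ∧ IsLocallyFiniteMeasure μ ∧ μ Fᶜ = 0 ∧
      ∀ z ∈ X, ∫⁻ ζ, K z ζ ∂μ ≤ 1), μ F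

/-- The parabolic counterpart `d̂` of `d`. -/
def pdist {N : ℕ} (d : Vec N → Vec N → ℝ) (z ζ : Vec N × ℝ) : ℝ :=
  (d z.1 ζ.1 ^ 4 + (z.2 - ζ.2) ^ 2) ^ (1 / 4 : ℝ)

/-- The parabolic ball `B̂(z,r)` (as a subset of ℝ^{N+1}). -/
def pBall {N : ℕ} (d : Vec N → Vec N → ℝ) (z : Vec N × ℝ) (r : ℝ) : Set (Vec N × ℝ) :=
  {ζ | pdist d z ζ < r}

/-- The ring-shaped set `Ω_k^h(z₀,λ)`. -/
def ringSet {N : ℕ} (d : Vec N → Vec N → ℝ) (S Ω : Set (Vec N × ℝ)) (z₀ : Vec N × ℝ)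
    (lam : ℝ) (k h : ℤ) : Set (Vec N × ℝ) :=
  {ζ ∈ S \ Ω | lam ^ (k + 1) ≤ z₀.2 - ζ.2 ∧ z₀.2 - ζ.2 ≤ lam ^ k ∧
    (1 / lam) ^ (h - 1) ≤ Real.exp (d z₀.1 ζ.1 ^ 2 / (z₀.2 - ζ.2)) ∧
    Real.exp (d z₀.1 ζ.1 ^ 2 / (z₀.2 - ζ.2)) ≤ (1 / lam) ^ h ∧
    pdist d z₀ ζ ≤ Real.sqrt lam}

/-- The set `D_k^h(z₀,λ)`. -/
def DSet {N : ℕ} (d : Vec N → Vec N → ℝ) (S Ω : Set (Vec N × ℝ)) (z₀ : Vec N × ℝ)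
    (lam : ℝ) (k h : ℤ) : Set (Vec N × ℝ) :=
  {ζ ∈ S \ Ω | lam ^ (k + 1) ≤ z₀.2 - ζ.2 ∧ z₀.2 - ζ.2 ≤ lam ^ k ∧
    Real.exp (d z₀.1 ζ.1 ^ 2 / (z₀.2 - ζ.2)) ≤ (1 / lam) ^ h ∧
    pdist d z₀ ζ ≤ Real.sqrt lam}

/-- The Wiener-type series `z_a^b(λ;s)`. -/
def zSeries {N : ℕ} (d : Vec N → Vec N → ℝ) (S Ω : Set (Vec N × ℝ)) (z₀ : Vec N × ℝ)
    (a b lam s : ℝ) : ℝ≥0∞ :=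
  ∑' k : ℕ, ∑' h : ℕ,
    if 1 ≤ k ∧ (k : ℝ) ≤ s ∧ 1 ≤ h then
      ENNReal.ofReal (lam ^ (b * (h : ℝ))) *
        capac S (gaussK d a) (DSet d S Ω z₀ lam (k : ℤ) (h : ℤ)) /
        volume (dBall d z₀.1 (lam ^ ((k : ℝ) / 2)))
    else 0

/-- The section `E_λ(ρ,τ)`. -/
def Eset {N : ℕ} (d : Vec N → Vec N → ℝ) (S Ω : Set (Vec N × ℝ)) (z₀ : Vec N × ℝ)
    (lam ρ τ : ℝ) : Set (Vec N) :=
  {x | (x, τ) ∈ S \ Ω ∧ pdist d z₀ (x, τ) ≤ Real.sqrt lam ∧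
    Real.exp (d z₀.1 x ^ 2 / (z₀.2 - τ)) ≤ ρ}

end

namespace Stmt18Aux

lemma dBall_isOpen {N : ℕ} {d : Vec N → Vec N → ℝ} (hd : GoodMetric d) (x : Vec N) (r : ℝ) :
    IsOpen (dBall d x r) := by
  have hc : Continuous fun y : Vec N => d x y :=
    hd.cont.comp (continuous_const.prodMk continuous_id)
  exact isOpen_Iio.preimage hc

lemma volume_dBall_pos {N : ℕ} {d : Vec N → Vec N → ℝ} (hd : GoodMetric d) (x : Vec N)
    {r : ℝ} (hr : 0 < r) : 0 < volume (dBall d x r) := by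
  refine (dBall_isOpen hd x r).measure_pos volume ⟨x, ?_⟩
  show d x x < r
  rw [(hd.eq_zero_iff x x).mpr rfl]; exact hr

lemma volume_dBall_lt_top {N : ℕ} {d : Vec N → Vec N → ℝ} (hd : GoodMetric d) (x : Vec N)
    (r : ℝ) : volume (dBall d x r) < ⊤ :=
  (hd.bounded x r).measure_lt_top

lemma doubling_iter {N : ℕ} {d : Vec N → Vec N → ℝ} {cd : ℝ} (hD : Doubling d cd)
    (x : Vec N) {r : ℝ} (hr : 0 < r) (m : ℕ) :
    volume (dBall d x (2 ^ m * r)) ≤ ENNReal.ofReal cd ^ m * volume (dBall d x r) := by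
  induction m with
  | zero => simp
  | succ m ih =>
    have h1 : (2:ℝ) ^ (m+1) * r = 2 * (2 ^ m * r) := by ring
    rw [h1]
    calc volume (dBall d x (2 * (2 ^ m * r)))
        ≤ ENNReal.ofReal cd * volume (dBall d x (2 ^ m * r)) := hD x _ (by positivity)
      _ ≤ ENNReal.ofReal cd * (ENNReal.ofReal cd ^ m * volume (dBall d x r)) :=
          mul_le_mul_right ih _
      _ = ENNReal.ofReal cd ^ (m+1) * volume (dBall d x r) := by ring

lemma arith1 (A R : ℝ) (hA : 0 ≤ A) (h : 1/2 * Real.sqrt (A/2) ≤ R) : A/8 ≤ R^2 := by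
  have h1 : (1/2 * Real.sqrt (A/2))^2 ≤ R^2 :=
    pow_le_pow_left₀ (by positivity) h 2
  rw [mul_pow, Real.sq_sqrt (by positivity)] at h1
  linarith

lemma arith2 (X B : ℝ) (hX0 : 0 ≤ X) (hB : 0 ≤ B) (h : X ≤ 2 * Real.sqrt B) :
    X^2 ≤ 4*B := by
  have h1 : X^2 ≤ (2 * Real.sqrt B)^2 := pow_le_pow_left₀ hX0 h 2
  rw [mul_pow, Real.sq_sqrt hB] at h1
  linarith

lemma arith3 (lam r L R : ℝ) (hlam : lam ≤ 1/8) (hrL : 0 ≤ r * L)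
    (hR2 : r*L/8 ≤ R^2) (hR0 : 0 ≤ R) : Real.sqrt (lam * r * L) ≤ R := by
  have h1 : lam * r * L ≤ R ^ 2 := by nlinarith
  calc Real.sqrt (lam * r * L) ≤ Real.sqrt (R^2) := Real.sqrt_le_sqrt h1
    _ = R := Real.sqrt_sq hR0

lemma arith4 (T lam r L R : ℝ) (hT2 : T ≤ 2*(lam*r)) (hlam : lam ≤ 1/8) (hr : 0 < r)
    (hL : 1 ≤ L) (hR2 : r*L/8 ≤ R^2) (hR0 : 0 ≤ R) : Real.sqrt T ≤ 2*R := by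
  have h1 : T ≤ (2*R)^2 := by nlinarith
  calc Real.sqrt T ≤ Real.sqrt ((2*R)^2) := Real.sqrt_le_sqrt h1
    _ = 2*R := Real.sqrt_sq (by positivity)

lemma u_lower (u₀ lam L r R δ : ℝ) (hu₀0 : 0 < u₀) (hlam0 : 0 < lam)
    (hlam3 : lam ≤ 1 / (16 * u₀ ^ 2)) (hL : 1 ≤ L) (hr : 0 < r) (hδ : 0 < δ)
    (hδ2 : δ ≤ 2 * (lam * r)) (hR2 : r * L / 8 ≤ R ^ 2) :
    u₀ ^ 2 ≤ R ^ 2 / δ := by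
  have hL0 : (0:ℝ) < L := lt_of_lt_of_le one_pos hL
  have h1 : u₀ ^ 2 ≤ 1 / (16 * lam) := by
    rw [le_div_iff₀ (by positivity)]
    rw [le_div_iff₀ (by positivity)] at hlam3
    nlinarith [hlam3]
  have h3 : L / (16 * lam) ≤ R ^ 2 / δ := by
    rw [div_le_div_iff₀ (by positivity) hδ]
    nlinarith [mul_le_mul_of_nonneg_left hδ2 hL0.le,
      mul_le_mul_of_nonneg_left hR2 (by positivity : (0:ℝ) ≤ 16 * lam)]
  have h2 : 1 / (16 * lam) ≤ L / (16 * lam) := by gcongr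
  linarith

lemma key2_lemma (Q C a₀ u : ℝ) (ha₀ : 0 < a₀) (hu0 : 0 < u)
    (h24 : 24 * Q / a₀ ≤ u) (hsq : Real.sqrt (8 * max C 0 / a₀) ≤ u) :
    C + 6 * Q * u ≤ a₀ * u ^ 2 / 2 := by
  rw [div_le_iff₀ ha₀] at h24
  have h8 : 8 * max C 0 ≤ a₀ * u ^ 2 := by
    have h := pow_le_pow_left₀ (Real.sqrt_nonneg _) hsq 2
    rw [Real.sq_sqrt (by positivity)] at h
    rw [div_le_iff₀ ha₀] at h
    linarith
  nlinarith [mul_le_mul_of_nonneg_right h24 hu0.le, h8, le_max_left C 0]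

lemma hnum_lemma (a₀ b₀ lam r L X R : ℝ) (hb₀ : 0 ≤ b₀) (ha₀ : 0 ≤ a₀) (hrL : 0 ≤ r*L)
    (hlam2 : lam * (64*b₀) ≤ a₀) (hX2 : X^2 ≤ 4*(lam * r * L)) (hR2 : r*L/8 ≤ R^2) :
    b₀*X^2 ≤ a₀*R^2/2 := by
  nlinarith [mul_le_mul_of_nonneg_left hX2 hb₀, mul_le_mul_of_nonneg_right hlam2 hrL,
    mul_le_mul_of_nonneg_left hR2 ha₀]

lemma key1_lemma (cd Q u : ℝ) (hcd : 1 < cd) (hQ : Q = Real.logb 2 cd) (hu1 : 1 ≤ u)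
    (m : ℕ) (hm : m = Nat.ceil (Real.logb 2 (6 * u))) :
    (cd:ℝ) ^ m ≤ cd * Real.exp (6 * Q * u) := by
  have hcd0 : (0:ℝ) < cd := lt_trans one_pos hcd
  have hQ0 : 0 < Real.logb 2 cd := Real.logb_pos one_lt_two hcd
  have h6u1 : (1:ℝ) ≤ 6 * u := by linarith
  have hlb0 : 0 ≤ Real.logb 2 (6 * u) := Real.logb_nonneg one_lt_two h6u1
  have hmle : (m:ℝ) ≤ Real.logb 2 (6 * u) + 1 := by
    rw [hm]; exact (Nat.ceil_lt_add_one hlb0).le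
  have hlogcd : 0 ≤ Real.log cd := Real.log_nonneg hcd.le
  have hle : Real.logb 2 (6 * u) * Real.log cd ≤ 6 * Q * u := by
    have hlog6u : Real.log (6 * u) ≤ 6 * u :=
      (Real.log_le_sub_one_of_pos (by linarith)).trans (by linarith)
    have hQform : Real.logb 2 (6 * u) * Real.log cd = Real.log (6 * u) * Q := by
      rw [hQ, Real.logb, Real.logb]; ring
    rw [hQform]
    have := mul_le_mul_of_nonneg_right hlog6u (by rw [hQ]; exact hQ0.le : 0 ≤ Q)
    linarith [this]
  calc (cd:ℝ) ^ m = Real.exp ((m:ℝ) * Real.log cd) := by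
        rw [← Real.log_pow, Real.exp_log (pow_pos hcd0 m)]
    _ ≤ Real.exp ((Real.logb 2 (6 * u) + 1) * Real.log cd) :=
        Real.exp_le_exp.mpr (mul_le_mul_of_nonneg_right hmle hlogcd)
    _ = cd * Real.exp (Real.logb 2 (6 * u) * Real.log cd) := by
        rw [add_mul, one_mul, Real.exp_add, Real.exp_log hcd0]; ring
    _ ≤ cd * Real.exp (6 * Q * u) :=
        mul_le_mul_of_nonneg_left (Real.exp_le_exp.mpr hle) hcd0.le

end Stmt18Aux

set_option maxHeartbeats 1000000 in
/-- Key step in the proof of Lemma 3.2 of the paper: for a fundamental-solution-like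
kernel `Γ` with two-sided Gaussian bounds, there is a structural `λ₀ ∈ (0,1/8]` such
that `Γ(y,s;ξ,τ) ≤ (1/2) Γ(x,t;ξ,τ)` whenever `(x,t),(ξ,τ)` lie in the small cylinder
`C(M,λ₀ r)` with `t > τ`, `τ ≤ s ≤ t`, and `y` is far from the spatial center. -/
theorem stmt18 (Λ a₀ b₀ cd : ℝ) (hΛ : 0 < Λ) (ha₀ : 0 < a₀) (hb₀ : 0 < b₀)
    (hcd : 1 < cd) :
    ∃ lam₀ : ℝ, 0 < lam₀ ∧ lam₀ ≤ 1 / 8 ∧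
      ∀ (N : ℕ), 1 ≤ N → ∀ d : Vec N → Vec N → ℝ, GoodMetric d → Doubling d cd →
      ∀ T₁ T₂ : EReal, T₁ < T₂ →
      ∀ Γ : (Vec N × ℝ) → (Vec N × ℝ) → ℝ≥0∞,
        (∀ z ∈ strip N T₁ T₂, ∀ ζ ∈ strip N T₁ T₂,
          (ENNReal.ofReal Λ)⁻¹ * gaussK d b₀ z ζ ≤ Γ z ζ ∧
            Γ z ζ ≤ ENNReal.ofReal Λ * gaussK d a₀ z ζ) →
      ∀ M r : ℝ, Real.exp 1 ≤ M → 0 < r →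
        {p : Vec N × ℝ | -r < p.2 ∧ p.2 < r} ⊆ strip N T₁ T₂ →
      ∀ (x : Vec N) (t : ℝ) (ξ : Vec N) (τ : ℝ) (y : Vec N) (s : ℝ),
        (x, t) ∈ strip N T₁ T₂ → (ξ, τ) ∈ strip N T₁ T₂ →
        (y, s) ∈ strip N T₁ T₂ →
        τ < t →
        d x 0 ≤ Real.sqrt (lam₀ * r * Real.log M) →
        d ξ 0 ≤ Real.sqrt (lam₀ * r * Real.log M) →
        -(lam₀ * r) < t → t < lam₀ * r → -(lam₀ * r) < τ → τ < lam₀ * r →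
        τ ≤ s → s ≤ t →
        (1 / 2) * Real.sqrt (r * Real.log M / 2) ≤ d y ξ →
        Γ (y, s) (ξ, τ) ≤ (1 / 2 : ℝ≥0∞) * Γ (x, t) (ξ, τ) := by
  have hQ : 0 < Real.logb 2 cd := Real.logb_pos one_lt_two hcd
  set Q : ℝ := Real.logb 2 cd with hQdef
  set C : ℝ := Real.log (2 * Λ ^ 2 * cd) with hCdef
  set u₀ : ℝ := max 1 (max (24 * Q / a₀) (Real.sqrt (8 * max C 0 / a₀))) with hu₀def
  have hu₀1 : (1:ℝ) ≤ u₀ := le_max_left _ _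
  have hu₀0 : (0:ℝ) < u₀ := lt_of_lt_of_le one_pos hu₀1
  have h24₀ : 24 * Q / a₀ ≤ u₀ := le_trans (le_max_left _ _) (le_max_right _ _)
  have hsq₀ : Real.sqrt (8 * max C 0 / a₀) ≤ u₀ :=
    le_trans (le_max_right _ _) (le_max_right _ _)
  set lam₀ : ℝ := min (1/8) (min (a₀ / (64 * b₀)) (1 / (16 * u₀ ^ 2))) with hlamdef
  have hlam0 : 0 < lam₀ := lt_min (by norm_num) (lt_min (by positivity) (by positivity))
  have hlam₁ : lam₀ ≤ 1/8 := min_le_left _ _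
  have hlam₂ : lam₀ ≤ a₀ / (64 * b₀) := le_trans (min_le_right _ _) (min_le_left _ _)
  have hlam₃ : lam₀ ≤ 1 / (16 * u₀ ^ 2) := le_trans (min_le_right _ _) (min_le_right _ _)
  have hcd0 : (0:ℝ) < cd := lt_trans one_pos hcd
  clear_value u₀ lam₀
  clear hu₀def hlamdef
  refine ⟨lam₀, hlam0, hlam₁, ?_⟩
  intro N hN d hd hD T₁ T₂ hT12 Γ hΓ M r hM hr hsubset x t ξ τ y s hxt hξτ hys hτt hdx hdξ
    ht1 ht2 hτ1 hτ2 hτs hst hfar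
  have hM0 : 0 < M := lt_of_lt_of_le (Real.exp_pos 1) hM
  have hL : (1:ℝ) ≤ Real.log M := (Real.le_log_iff_exp_le hM0).mpr hM
  have hL0 : (0:ℝ) < Real.log M := lt_of_lt_of_le one_pos hL
  have hrL : (0:ℝ) < r * Real.log M := mul_pos hr hL0
  rcases eq_or_lt_of_le hτs with heq | hτs'
  · -- s = τ : the kernel vanishes
    have h := (hΓ (y, s) hys (ξ, τ) hξτ).2
    have hg : gaussK d a₀ (y, s) (ξ, τ) = 0 := if_neg (not_lt.mpr (le_of_eq heq.symm))
    rw [hg, mul_zero] at h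
    exact le_trans h (zero_le)
  · -- main case : τ < s
    have hδ : 0 < s - τ := sub_pos.mpr hτs'
    have hT : 0 < t - τ := sub_pos.mpr hτt
    have hδT : s - τ ≤ t - τ := by linarith
    have hδ2 : s - τ ≤ 2 * (lam₀ * r) := by linarith
    have hT2 : t - τ ≤ 2 * (lam₀ * r) := by linarith
    have hR0 : 0 < d y ξ := lt_of_lt_of_le (by positivity) hfar
    have hR2 : r * Real.log M / 8 ≤ d y ξ ^ 2 :=
      Stmt18Aux.arith1 (r * Real.log M) (d y ξ) hrL.le hfar
    have hXle : d x ξ ≤ 2 * Real.sqrt (lam₀ * r * Real.log M) := by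
      calc d x ξ ≤ d x 0 + d 0 ξ := hd.triangle x 0 ξ
        _ = d x 0 + d ξ 0 := by rw [hd.symm 0 ξ]
        _ ≤ 2 * Real.sqrt (lam₀ * r * Real.log M) := by linarith [hdx, hdξ]
    have hX2 : d x ξ ^ 2 ≤ 4 * (lam₀ * r * Real.log M) :=
      Stmt18Aux.arith2 (d x ξ) (lam₀ * r * Real.log M) (hd.nonneg x ξ)
        (by positivity) hXle
    have hslR : Real.sqrt (lam₀ * r * Real.log M) ≤ d y ξ :=
      Stmt18Aux.arith3 lam₀ r (Real.log M) (d y ξ) hlam₁ hrL.le hR2 hR0.le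
    have hXR : d x ξ ≤ 2 * d y ξ := by linarith
    have hsT : Real.sqrt (t - τ) ≤ 2 * d y ξ :=
      Stmt18Aux.arith4 (t - τ) lam₀ r (Real.log M) (d y ξ) hT2 hlam₁ hr hL hR2 hR0.le
    -- the quantity u and the number of doublings m
    have hsδ : 0 < Real.sqrt (s - τ) := Real.sqrt_pos.mpr hδ
    set u : ℝ := d y ξ / Real.sqrt (s - τ) with hudef
    have hu0 : 0 < u := div_pos hR0 hsδ
    have hu2 : u ^ 2 = d y ξ ^ 2 / (s - τ) := by
      rw [hudef, div_pow, Real.sq_sqrt hδ.le]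
    have huu : u₀ ≤ u := by
      have h4 : u₀ ^ 2 ≤ u ^ 2 := by
        rw [hu2]
        exact Stmt18Aux.u_lower u₀ lam₀ (Real.log M) r (d y ξ) (s - τ) hu₀0 hlam0
          hlam₃ hL hr hδ hδ2 hR2
      have h5 := Real.sqrt_le_sqrt h4
      rwa [Real.sqrt_sq hu₀0.le, Real.sqrt_sq hu0.le] at h5
    have hu1 : (1:ℝ) ≤ u := le_trans hu₀1 huu
    set m : ℕ := Nat.ceil (Real.logb 2 (6 * u)) with hmdef
    have h2m : 6 * u ≤ (2:ℝ) ^ m := by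
      calc 6 * u = (2:ℝ) ^ (Real.logb 2 (6 * u)) :=
            (Real.rpow_logb two_pos (by norm_num) (by linarith)).symm
        _ ≤ (2:ℝ) ^ ((m:ℝ)) := Real.rpow_le_rpow_of_exponent_le one_le_two (Nat.le_ceil _)
        _ = (2:ℝ) ^ m := Real.rpow_natCast 2 m
    have h6R : 6 * d y ξ ≤ 2 ^ m * Real.sqrt (s - τ) := by
      have he : 6 * d y ξ = (6 * u) * Real.sqrt (s - τ) := by
        rw [hudef]; field_simp
      rw [he]
      exact mul_le_mul_of_nonneg_right h2m hsδ.le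
    -- ball inclusion
    have hsub2 : dBall d x (Real.sqrt (t - τ)) ⊆ dBall d y (2 ^ m * Real.sqrt (s - τ)) := by
      intro w hw
      have hw' : d x w < Real.sqrt (t - τ) := hw
      have h1 : d y w ≤ d y x + d x w := hd.triangle y x w
      have h2 : d y x ≤ d y ξ + d ξ x := hd.triangle y ξ x
      have h3 : d ξ x = d x ξ := hd.symm ξ x
      show d y w < 2 ^ m * Real.sqrt (s - τ)
      have h5 : d y w < 6 * d y ξ := by rw [h3] at h2; linarith
      linarith
    -- volume comparison
    have hVx0 : volume (dBall d x (Real.sqrt (t - τ))) ≠ 0 :=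
      (Stmt18Aux.volume_dBall_pos hd x (Real.sqrt_pos.mpr hT)).ne'
    have hVxt : volume (dBall d x (Real.sqrt (t - τ))) ≠ ⊤ :=
      (Stmt18Aux.volume_dBall_lt_top hd x _).ne
    have hVy0 : volume (dBall d y (Real.sqrt (s - τ))) ≠ 0 :=
      (Stmt18Aux.volume_dBall_pos hd y hsδ).ne'
    have hVyt : volume (dBall d y (Real.sqrt (s - τ))) ≠ ⊤ :=
      (Stmt18Aux.volume_dBall_lt_top hd y _).ne
    have hVV : volume (dBall d x (Real.sqrt (t - τ))) ≤
        ENNReal.ofReal (cd ^ m) * volume (dBall d y (Real.sqrt (s - τ))) := by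
      calc volume (dBall d x (Real.sqrt (t - τ)))
          ≤ volume (dBall d y (2 ^ m * Real.sqrt (s - τ))) := measure_mono hsub2
        _ ≤ ENNReal.ofReal cd ^ m * volume (dBall d y (Real.sqrt (s - τ))) :=
            Stmt18Aux.doubling_iter hD y hsδ m
        _ = ENNReal.ofReal (cd ^ m) * volume (dBall d y (Real.sqrt (s - τ))) := by
            rw [ENNReal.ofReal_pow hcd0.le]
    have hinv : (volume (dBall d y (Real.sqrt (s - τ))))⁻¹ ≤
        ENNReal.ofReal (cd ^ m) * (volume (dBall d x (Real.sqrt (t - τ))))⁻¹ := by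
      calc (volume (dBall d y (Real.sqrt (s - τ))))⁻¹
          = (volume (dBall d x (Real.sqrt (t - τ))) *
              (volume (dBall d x (Real.sqrt (t - τ))))⁻¹) *
              (volume (dBall d y (Real.sqrt (s - τ))))⁻¹ := by
            rw [ENNReal.mul_inv_cancel hVx0 hVxt, one_mul]
        _ ≤ ((ENNReal.ofReal (cd ^ m) * volume (dBall d y (Real.sqrt (s - τ)))) *
              (volume (dBall d x (Real.sqrt (t - τ))))⁻¹) *
              (volume (dBall d y (Real.sqrt (s - τ))))⁻¹ :=
            mul_le_mul_left (mul_le_mul_left hVV _) _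
        _ = (ENNReal.ofReal (cd ^ m) * (volume (dBall d x (Real.sqrt (t - τ))))⁻¹) *
              (volume (dBall d y (Real.sqrt (s - τ))) *
                (volume (dBall d y (Real.sqrt (s - τ))))⁻¹) := by ring
        _ = ENNReal.ofReal (cd ^ m) * (volume (dBall d x (Real.sqrt (t - τ))))⁻¹ := by
            rw [ENNReal.mul_inv_cancel hVy0 hVyt, mul_one]
    -- key scalar estimates
    have h24 : 24 * Q / a₀ ≤ u := le_trans h24₀ huu
    have hsq : Real.sqrt (8 * max C 0 / a₀) ≤ u := le_trans hsq₀ huu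
    have key2 : C + 6 * Q * u ≤ a₀ * u ^ 2 / 2 :=
      Stmt18Aux.key2_lemma Q C a₀ u ha₀ hu0 h24 hsq
    have key1 : (cd:ℝ) ^ m ≤ cd * Real.exp (6 * Q * u) :=
      Stmt18Aux.key1_lemma cd Q u hcd hQdef hu1 m hmdef
    have key3 : a₀ * u ^ 2 / 2 + b₀ * d x ξ ^ 2 / (t - τ) ≤ a₀ * d y ξ ^ 2 / (s - τ) := by
      have hlb : lam₀ * (64 * b₀) ≤ a₀ := by
        rw [le_div_iff₀ (by positivity)] at hlam₂; exact hlam₂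
      have hnum : b₀ * d x ξ ^ 2 ≤ a₀ * d y ξ ^ 2 / 2 :=
        Stmt18Aux.hnum_lemma a₀ b₀ lam₀ r (Real.log M) (d x ξ) (d y ξ)
          hb₀.le ha₀.le hrL.le hlb hX2 hR2
      have h5 : b₀ * d x ξ ^ 2 / (t - τ) ≤ (a₀ * d y ξ ^ 2 / 2) / (s - τ) :=
        div_le_div₀ (by positivity) hnum hδ hδT
      have h6 : a₀ * u ^ 2 / 2 = (a₀ * d y ξ ^ 2 / 2) / (s - τ) := by
        rw [hu2]; ring
      rw [h6]
      have h7 : (a₀ * d y ξ ^ 2 / 2) / (s - τ) + (a₀ * d y ξ ^ 2 / 2) / (s - τ) =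
          a₀ * d y ξ ^ 2 / (s - τ) := by ring
      linarith [h5, h7]
    have hscal : Λ * cd ^ m * Real.exp (-a₀ * d y ξ ^ 2 / (s - τ)) ≤
        1/2 * Λ⁻¹ * Real.exp (-b₀ * d x ξ ^ 2 / (t - τ)) := by
      have h2cd : (0:ℝ) < 2 * Λ ^ 2 * cd := by positivity
      calc Λ * cd ^ m * Real.exp (-a₀ * d y ξ ^ 2 / (s - τ))
          ≤ Λ * (cd * Real.exp (6 * Q * u)) * Real.exp (-a₀ * d y ξ ^ 2 / (s - τ)) :=
            mul_le_mul_of_nonneg_right (mul_le_mul_of_nonneg_left key1 hΛ.le)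
              (Real.exp_pos _).le
        _ = 1/2 * Λ⁻¹ * Real.exp (C + 6 * Q * u + -a₀ * d y ξ ^ 2 / (s - τ)) := by
            rw [Real.exp_add, Real.exp_add, hCdef, Real.exp_log h2cd]
            field_simp
        _ ≤ 1/2 * Λ⁻¹ * Real.exp (-b₀ * d x ξ ^ 2 / (t - τ)) := by
            refine mul_le_mul_of_nonneg_left (Real.exp_le_exp.mpr ?_) (by positivity)
            have hra : -a₀ * d y ξ ^ 2 / (s - τ) = -(a₀ * d y ξ ^ 2 / (s - τ)) := by ring
            have hrb : -b₀ * d x ξ ^ 2 / (t - τ) = -(b₀ * d x ξ ^ 2 / (t - τ)) := by ring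
            rw [hra, hrb]
            linarith [key2, key3]
    -- Gaussian bounds for Γ
    have hup : Γ (y, s) (ξ, τ) ≤ ENNReal.ofReal Λ *
        ((volume (dBall d y (Real.sqrt (s - τ))))⁻¹ *
          ENNReal.ofReal (Real.exp (-a₀ * d y ξ ^ 2 / (s - τ)))) := by
      have h := (hΓ (y, s) hys (ξ, τ) hξτ).2
      have hg : gaussK d a₀ (y, s) (ξ, τ) =
          (volume (dBall d y (Real.sqrt (s - τ))))⁻¹ *
            ENNReal.ofReal (Real.exp (-a₀ * d y ξ ^ 2 / (s - τ))) := if_pos hτs'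
      rwa [hg] at h
    have hlo : (ENNReal.ofReal Λ)⁻¹ *
        ((volume (dBall d x (Real.sqrt (t - τ))))⁻¹ *
          ENNReal.ofReal (Real.exp (-b₀ * d x ξ ^ 2 / (t - τ)))) ≤ Γ (x, t) (ξ, τ) := by
      have h := (hΓ (x, t) hxt (ξ, τ) hξτ).1
      have hg : gaussK d b₀ (x, t) (ξ, τ) =
          (volume (dBall d x (Real.sqrt (t - τ))))⁻¹ *
            ENNReal.ofReal (Real.exp (-b₀ * d x ξ ^ 2 / (t - τ))) := if_pos hτt
      rwa [hg] at h
    have hhalf : (ENNReal.ofReal (1/2) : ℝ≥0∞) = 1/2 := by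
      rw [ENNReal.ofReal_div_of_pos (by norm_num)]; norm_num
    calc Γ (y, s) (ξ, τ)
        ≤ ENNReal.ofReal Λ * ((volume (dBall d y (Real.sqrt (s - τ))))⁻¹ *
            ENNReal.ofReal (Real.exp (-a₀ * d y ξ ^ 2 / (s - τ)))) := hup
      _ ≤ ENNReal.ofReal Λ * ((ENNReal.ofReal (cd ^ m) *
            (volume (dBall d x (Real.sqrt (t - τ))))⁻¹) *
            ENNReal.ofReal (Real.exp (-a₀ * d y ξ ^ 2 / (s - τ)))) :=
          mul_le_mul_right (mul_le_mul_left hinv _) _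
      _ = (ENNReal.ofReal Λ * ENNReal.ofReal (cd ^ m) *
            ENNReal.ofReal (Real.exp (-a₀ * d y ξ ^ 2 / (s - τ)))) *
            (volume (dBall d x (Real.sqrt (t - τ))))⁻¹ := by ring
      _ = ENNReal.ofReal (Λ * cd ^ m * Real.exp (-a₀ * d y ξ ^ 2 / (s - τ))) *
            (volume (dBall d x (Real.sqrt (t - τ))))⁻¹ := by
          rw [← ENNReal.ofReal_mul hΛ.le, ← ENNReal.ofReal_mul (by positivity)]
      _ ≤ ENNReal.ofReal (1/2 * Λ⁻¹ * Real.exp (-b₀ * d x ξ ^ 2 / (t - τ))) *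
            (volume (dBall d x (Real.sqrt (t - τ))))⁻¹ :=
          mul_le_mul_left (ENNReal.ofReal_le_ofReal hscal) _
      _ = (1/2 : ℝ≥0∞) * ((ENNReal.ofReal Λ)⁻¹ *
            ((volume (dBall d x (Real.sqrt (t - τ))))⁻¹ *
              ENNReal.ofReal (Real.exp (-b₀ * d x ξ ^ 2 / (t - τ))))) := by
          rw [ENNReal.ofReal_mul (by positivity : (0:ℝ) ≤ 1/2 * Λ⁻¹),
            ENNReal.ofReal_mul (by norm_num : (0:ℝ) ≤ 1/2), hhalf,
            ENNReal.ofReal_inv_of_pos hΛ]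
          ring
      _ ≤ (1/2 : ℝ≥0∞) * Γ (x, t) (ξ, τ) := mul_le_mul_right hlo _
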